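/- Let λ : ℕ → ℝ be a bounded sequence, L > 0 a real number, I a countable index set, and g : I → ℓ²(ℕ, ℂ). Then the following are equivalent: (a) for every f ∈ ℓ²(ℕ, ℂ), if ∑_{n=0}^∞ conj(f(n))·(λ(n))^t·g_i(n) = 0 for every i ∈ I and every t ∈ [0, L], then f = 0 (i.e., the system {D^t g_i : i ∈ I, t ∈ [0, L]} is complete in ℓ²(ℕ, ℂ), having trivial orthogonal complement); (b) for every v ∈ ℝ and every f ∈ ℓ²(ℕ, ℂ) with f(n) = 0 whenever λ(n) ≠ v, if ∑_{n=0}^∞ conj(f(n))·g_i(n) = 0 for every i ∈ I, then f = 0 (i.e., for each eigenvalue v of D, the coordinate projections of the vectors g_i onto the eigenspace {f : f(n) = 0 whenever λ(n) ≠ v} are complete in that eigenspace). -/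

import Mathlib

open Filter Topology Set
open scoped ENNReal

lemma aux_moments (x : ℕ → ℝ) (M : ℝ) (hM : ∀ n, |x n| ≤ M)
    (a : ℕ → ℂ) (ha : Summable fun n => ‖a n‖)
    (L : ℝ) (hL : 0 < L)
    (h : ∀ t : ℝ, t ∈ Set.Icc (0:ℝ) L → ∑' n : ℕ, a n * ((x n : ℂ) ^ (t : ℂ)) = 0)
    (m : ℕ) : ∑' n : ℕ, a n * ((x n : ℂ) ^ (m : ℂ)) = 0 := by
  rcases Nat.eq_zero_or_pos m with hm | hm
  · subst hm
    have := h 0 ⟨le_refl _, hL.le⟩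
    simpa using this
  -- setup
  set M' : ℝ := max M 1 with hM'def
  have hM1 : (1:ℝ) ≤ M' := le_max_right _ _
  have hxM' : ∀ n, |x n| ≤ M' := fun n => (hM n).trans (le_max_left _ _)
  set R : ℝ := (m:ℝ) + L + 1 with hRdef
  have hR : 0 < R := by positivity
  set B : Set ℂ := Metric.ball (R:ℂ) R with hBdef
  have hmem : ∀ s ∈ B, 0 < s.re ∧ s.re < 2*R ∧ |s.im| < R := by
    intro s hs
    rw [hBdef, Metric.mem_ball, Complex.dist_eq] at hs
    have h1 : |s.re - R| ≤ ‖s - R‖ := by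
      simpa using Complex.abs_re_le_norm (s - R)
    have h2 : |s.im| ≤ ‖s - R‖ := by
      simpa using Complex.abs_im_le_norm (s - R)
    have h1' := abs_lt.mp (lt_of_le_of_lt h1 hs)
    exact ⟨by linarith [h1'.1], by linarith [h1'.2], lt_of_le_of_lt h2 hs⟩
  have hreal : ∀ t : ℝ, 0 < t → t < 2*R → (t:ℂ) ∈ B := by
    intro t ht1 ht2
    rw [hBdef, Metric.mem_ball, Complex.dist_eq, ← Complex.ofReal_sub,
      Complex.norm_real, Real.norm_eq_abs]
    rw [abs_lt]; constructor <;> linarith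
  have hsne : ∀ s ∈ B, s ≠ 0 := by
    intro s hs h0
    have := (hmem s hs).1
    rw [h0] at this; simp at this
  set C : ℝ := M' ^ (2*R) * Real.exp (Real.pi * R) with hCdef
  have hC0 : 0 ≤ C := by positivity
  -- bound
  have hbound : ∀ (n : ℕ) (s : ℂ), s ∈ B → ‖a n * ((x n : ℂ) ^ s)‖ ≤ ‖a n‖ * C := by
    intro n s hs
    rw [norm_mul]
    refine mul_le_mul_of_nonneg_left ?_ (norm_nonneg _)
    by_cases hz : (x n : ℂ) = 0
    · rw [hz, Complex.zero_cpow (hsne s hs), norm_zero]; exact hC0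
    obtain ⟨hre, hre2, him⟩ := hmem s hs
    have harg : -(Real.pi * R) ≤ Complex.arg (x n : ℂ) * s.im := by
      have h1 : |Complex.arg (x n : ℂ) * s.im| ≤ Real.pi * R := by
        rw [abs_mul]
        exact mul_le_mul (Complex.abs_arg_le_pi _) him.le (abs_nonneg _) Real.pi_pos.le
      linarith [neg_abs_le (Complex.arg (x n : ℂ) * s.im)]
    calc ‖(x n : ℂ) ^ s‖
        = |x n| ^ s.re / Real.exp (Complex.arg (x n : ℂ) * s.im) := by
          rw [Complex.norm_cpow_of_ne_zero hz, Complex.norm_real, Real.norm_eq_abs]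
      _ ≤ M' ^ (2*R) / Real.exp (-(Real.pi * R)) := by
          refine div_le_div₀ (by positivity) ?_ (Real.exp_pos _) (Real.exp_le_exp.mpr harg)
          calc |x n| ^ s.re ≤ M' ^ s.re :=
                  Real.rpow_le_rpow (abs_nonneg _) (hxM' n) hre.le
            _ ≤ M' ^ (2*R) := Real.rpow_le_rpow_of_exponent_le hM1 hre2.le
      _ = C := by rw [hCdef, Real.exp_neg, div_inv_eq_mul]
  -- differentiability of terms
  have hterm : ∀ n : ℕ, DifferentiableOn ℂ (fun s => a n * ((x n : ℂ) ^ s)) B := by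
    intro n
    by_cases hz : (x n : ℂ) = 0
    · refine (differentiableOn_const 0).congr ?_
      intro s hs
      rw [hz, Complex.zero_cpow (hsne s hs), mul_zero]
    · intro s hs
      exact (((differentiableAt_id).const_cpow (Or.inl hz)).const_mul
        (a n)).differentiableWithinAt
  have hdiff : DifferentiableOn ℂ (fun s => ∑' n : ℕ, a n * ((x n : ℂ) ^ s)) B :=
    Complex.differentiableOn_tsum_of_summable_norm (ha.mul_right C) hterm Metric.isOpen_ball hbound
  have hanal := hdiff.analyticOnNhd Metric.isOpen_ball
  -- frequently zero near L/2
  set u : ℕ → ℝ := fun k => L/2 + (L/2)/((k:ℝ)+2) with hudef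
  have hq : ∀ k : ℕ, (0:ℝ) < (L/2)/((k:ℝ)+2) ∧ (L/2)/((k:ℝ)+2) ≤ L/2 := by
    intro k
    have hk0 : (0:ℝ) ≤ (k:ℝ) := Nat.cast_nonneg k
    have hk2 : (1:ℝ) ≤ (k:ℝ) + 2 := by linarith
    exact ⟨by positivity, div_le_self (by linarith) hk2⟩
  have hu_mem : ∀ k, u k ∈ Set.Icc (0:ℝ) L := by
    intro k
    obtain ⟨h1, h2⟩ := hq k
    constructor
    · show (0:ℝ) ≤ L/2 + (L/2)/((k:ℝ)+2)
      linarith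
    · show L/2 + (L/2)/((k:ℝ)+2) ≤ L
      linarith
  have hu_ne : ∀ k, u k ≠ L/2 := by
    intro k
    obtain ⟨h1, _⟩ := hq k
    show L/2 + (L/2)/((k:ℝ)+2) ≠ L/2
    linarith
  have hu_tend : Tendsto u atTop (𝓝 (L/2)) := by
    have h0' := (tendsto_const_div_atTop_nhds_zero_nat (L/2)).comp (tendsto_add_atTop_nat 2)
    have h0 : Tendsto (fun k : ℕ => (L/2)/((k:ℝ)+2)) atTop (𝓝 0) := by
      refine Tendsto.congr (fun k => ?_) h0'
      show (L/2) / (((k+2:ℕ)):ℝ) = (L/2)/((k:ℝ)+2)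
      push_cast; ring
    have h1 := h0.const_add (L/2)
    simpa using h1
  have hLhalf_mem : ((L/2 : ℝ):ℂ) ∈ B := by
    refine hreal (L/2) (by linarith) ?_
    rw [hRdef]
    have : (0:ℝ) ≤ (m:ℝ) := Nat.cast_nonneg m
    linarith
  have hfreq : ∃ᶠ z in 𝓝[≠] ((L/2:ℝ):ℂ), (∑' n : ℕ, a n * ((x n : ℂ) ^ z)) = 0 := by
    have htendC : Tendsto (fun k => ((u k : ℝ):ℂ)) atTop (𝓝[≠] ((L/2:ℝ):ℂ)) := by
      rw [tendsto_nhdsWithin_iff]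
      constructor
      · exact (Complex.continuous_ofReal.tendsto _).comp hu_tend
      · refine Eventually.of_forall fun k => ?_
        simp only [Set.mem_compl_iff, Set.mem_singleton_iff]
        exact fun hc => hu_ne k (by exact_mod_cast hc)
    exact htendC.frequently (Eventually.of_forall fun k => h (u k) (hu_mem k)).frequently
  have hzero := hanal.eqOn_zero_of_preconnected_of_frequently_eq_zero
    ((convex_ball _ _).isPreconnected) hLhalf_mem hfreq
  have hmmem : ((m:ℝ):ℂ) ∈ B := by
    refine hreal (m:ℝ) (by exact_mod_cast hm) ?_
    rw [hRdef]; linarith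
  have := hzero hmmem
  simpa using this
lemma aux_cont (x : ℕ → ℝ) (M' : ℝ) (hxM : ∀ n, |x n| ≤ M')
    (a : ℕ → ℂ) (ha : Summable fun n => ‖a n‖)
    (hmom : ∀ m : ℕ, ∑' n : ℕ, a n * ((x n : ℂ)) ^ m = 0)
    (φ : ℝ → ℝ) (hφ : Continuous φ) :
    ∑' n : ℕ, a n * ((φ (x n) : ℝ) : ℂ) = 0 := by
  have hxmem : ∀ n, x n ∈ Set.Icc (-M') M' := fun n => abs_le.mp (hxM n)
  -- summability of a * (bounded)
  have hsumm : ∀ (ψ : ℕ → ℂ) (c : ℝ), (∀ n, ‖ψ n‖ ≤ c) →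
      Summable (fun n => a n * ψ n) := by
    intro ψ c hc
    refine Summable.of_norm_bounded (ha.mul_right c) fun n => ?_
    rw [norm_mul]
    exact mul_le_mul_of_nonneg_left (hc n) (norm_nonneg _)
  -- polynomials annihilate
  have hpoly : ∀ p : Polynomial ℝ, ∑' n : ℕ, a n * ((p.eval (x n) : ℝ) : ℂ) = 0 := by
    intro p
    set N := p.natDegree + 1 with hN
    have heval : ∀ y : ℝ, ((p.eval y : ℝ) : ℂ)
        = ∑ i ∈ Finset.range N, ((p.coeff i : ℝ) : ℂ) * ((y : ℂ)) ^ i := by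
      intro y
      rw [Polynomial.eval_eq_sum_range]
      push_cast
      rfl
    have hsum_i : ∀ i : ℕ, Summable (fun n => ((p.coeff i : ℝ):ℂ) * (a n * ((x n : ℂ)) ^ i)) := by
      intro i
      refine (hsumm (fun n => ((x n : ℂ)) ^ i) (M' ^ i + 1) fun n => ?_).mul_left _
      have h1 : ‖((x n : ℂ)) ^ i‖ = |x n| ^ i := by
        rw [norm_pow, Complex.norm_real, Real.norm_eq_abs]
      rw [h1]
      have := pow_le_pow_left₀ (abs_nonneg (x n)) (hxM n) i
      nlinarith [pow_nonneg (abs_nonneg (x n)) i]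
    calc ∑' n : ℕ, a n * ((p.eval (x n) : ℝ) : ℂ)
        = ∑' n : ℕ, ∑ i ∈ Finset.range N, ((p.coeff i : ℝ):ℂ) * (a n * ((x n : ℂ)) ^ i) := by
          refine tsum_congr fun n => ?_
          rw [heval (x n), Finset.mul_sum]
          exact Finset.sum_congr rfl fun i _ => by ring
      _ = ∑ i ∈ Finset.range N, ∑' n : ℕ, ((p.coeff i : ℝ):ℂ) * (a n * ((x n : ℂ)) ^ i) :=
          Summable.tsum_finsetSum fun i _ => hsum_i i
      _ = 0 := by
          refine Finset.sum_eq_zero fun i _ => ?_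
          rw [tsum_mul_left, hmom i, mul_zero]
  -- approximate φ by polynomials
  have key : ∀ ε : ℝ, 0 < ε → ‖∑' n : ℕ, a n * ((φ (x n) : ℝ) : ℂ)‖ ≤ (∑' n, ‖a n‖) * ε := by
    intro ε hε
    -- Stone-Weierstrass
    obtain ⟨p, hp⟩ : ∃ p : Polynomial ℝ, ∀ y ∈ Set.Icc (-M') M', |φ y - p.eval y| ≤ ε := by
      have hmem : (ContinuousMap.restrict (Set.Icc (-M') M') ⟨φ, hφ⟩ : C(Set.Icc (-M') M', ℝ))
          ∈ (polynomialFunctions (Set.Icc (-M') M')).topologicalClosure := by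
        rw [polynomialFunctions_closure_eq_top]; trivial
      rw [← SetLike.mem_coe, Subalgebra.topologicalClosure_coe] at hmem
      rw [Metric.mem_closure_iff] at hmem
      obtain ⟨q, hq_mem, hq_dist⟩ := hmem ε hε
      rw [polynomialFunctions_coe] at hq_mem
      obtain ⟨p, hp⟩ := hq_mem
      refine ⟨p, fun y hy => ?_⟩
      have h1 := ContinuousMap.dist_apply_le_dist
        (f := ContinuousMap.restrict (Set.Icc (-M') M') ⟨φ, hφ⟩) (g := q) ⟨y, hy⟩
      have hq_apply : q ⟨y, hy⟩ = p.eval y := by rw [← hp]; simp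
      rw [hq_apply] at h1
      have h2 : |φ y - p.eval y| ≤ dist
          (ContinuousMap.restrict (Set.Icc (-M') M') (⟨φ, hφ⟩ : C(ℝ, ℝ))) q := by
        simpa [Real.dist_eq] using h1
      exact h2.trans hq_dist.le
    have hsub : (∑' n : ℕ, a n * ((φ (x n) : ℝ) : ℂ))
        = ∑' n : ℕ, a n * (((φ (x n) - p.eval (x n) : ℝ)) : ℂ) := by
      have hs1 : Summable (fun n => a n * ((φ (x n) : ℝ) : ℂ)) := by
        obtain ⟨c, hc⟩ := (isCompact_Icc (a := -M') (b := M')).exists_bound_of_continuousOn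
          (hφ.continuousOn)
        refine hsumm _ c fun n => ?_
        rw [Complex.norm_real]
        exact hc _ (hxmem n)
      have hs2 : Summable (fun n => a n * ((p.eval (x n) : ℝ) : ℂ)) := by
        obtain ⟨c, hc⟩ := (isCompact_Icc (a := -M') (b := M')).exists_bound_of_continuousOn
          ((p.continuous_aeval).continuousOn)
        refine hsumm _ c fun n => ?_
        rw [Complex.norm_real]
        have := hc _ (hxmem n)
        simpa using this
      have heq : ∑' n : ℕ, a n * (((φ (x n) - p.eval (x n) : ℝ)) : ℂ)
          = (∑' n : ℕ, a n * ((φ (x n) : ℝ):ℂ)) - ∑' n : ℕ, a n * ((p.eval (x n) : ℝ):ℂ) := by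
        rw [← Summable.tsum_sub hs1 hs2]
        refine tsum_congr fun n => ?_
        push_cast
        ring
      rw [heq, hpoly p, sub_zero]
    rw [hsub]
    have hsumnorm : Summable (fun n => ‖a n * (((φ (x n) - p.eval (x n) : ℝ)) : ℂ)‖) := by
      refine Summable.of_nonneg_of_le (fun n => norm_nonneg _) (fun n => ?_) (ha.mul_right ε)
      rw [norm_mul, Complex.norm_real, Real.norm_eq_abs]
      exact mul_le_mul_of_nonneg_left (hp _ (hxmem n)) (norm_nonneg _)
    calc ‖∑' n : ℕ, a n * (((φ (x n) - p.eval (x n) : ℝ)) : ℂ)‖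
        ≤ ∑' n : ℕ, ‖a n * (((φ (x n) - p.eval (x n) : ℝ)) : ℂ)‖ :=
          norm_tsum_le_tsum_norm hsumnorm
      _ ≤ ∑' n : ℕ, ‖a n‖ * ε := by
          refine Summable.tsum_le_tsum (fun n => ?_) hsumnorm (ha.mul_right ε)
          rw [norm_mul, Complex.norm_real, Real.norm_eq_abs]
          exact mul_le_mul_of_nonneg_left (hp _ (hxmem n)) (norm_nonneg _)
      _ = (∑' n, ‖a n‖) * ε := tsum_mul_right
  -- conclude
  have hA : 0 ≤ ∑' n, ‖a n‖ := tsum_nonneg fun n => norm_nonneg _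
  rw [← norm_le_zero_iff]
  refine le_of_forall_pos_le_add fun ε hε => ?_
  have := key (ε / ((∑' n, ‖a n‖) + 1)) (by positivity)
  calc ‖∑' n : ℕ, a n * ((φ (x n) : ℝ) : ℂ)‖
      ≤ (∑' n, ‖a n‖) * (ε / ((∑' n, ‖a n‖) + 1)) := this
    _ ≤ ε := by
        rw [mul_div_assoc']
        rw [div_le_iff₀ (by positivity)]
        nlinarith
    _ = 0 + ε := by ring
lemma aux_indicator (x : ℕ → ℝ) (a : ℕ → ℂ) (ha : Summable fun n => ‖a n‖)
    (hcont : ∀ φ : ℝ → ℝ, Continuous φ → ∑' n : ℕ, a n * ((φ (x n) : ℝ) : ℂ) = 0)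
    (v : ℝ) : ∑' n : ℕ, (if x n = v then a n else 0) = 0 := by
  set φ : ℕ → ℝ → ℝ := fun k z => max 0 (1 - (k:ℝ) * |z - v|) with hφdef
  have hφcont : ∀ k, Continuous (φ k) :=
    fun k => continuous_const.max
      (continuous_const.sub (continuous_const.mul ((continuous_id.sub continuous_const).abs)))
  have hφ01 : ∀ k z, 0 ≤ φ k z ∧ φ k z ≤ 1 := by
    intro k z
    constructor
    · exact le_max_left _ _
    · refine max_le zero_le_one ?_
      have : 0 ≤ (k:ℝ) * |z - v| := by positivity
      linarith
  have hzero : ∀ k, ∑' n : ℕ, a n * ((φ k (x n) : ℝ) : ℂ) = 0 :=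
    fun k => hcont (φ k) (hφcont k)
  have htend : Tendsto (fun k => ∑' n : ℕ, a n * ((φ k (x n) : ℝ) : ℂ)) atTop
      (𝓝 (∑' n : ℕ, (if x n = v then a n else 0))) := by
    refine tendsto_tsum_of_dominated_convergence ha (fun n => ?_)
      (Eventually.of_forall fun k n => ?_)
    · by_cases hxv : x n = v
      · rw [if_pos hxv]
        have : ∀ k : ℕ, a n * ((φ k (x n) : ℝ) : ℂ) = a n := by
          intro k
          rw [hxv]
          simp [hφdef]
        simpa [this] using tendsto_const_nhds (x := a n) (f := atTop (α := ℕ))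
      · rw [if_neg hxv]
        have hd : 0 < |x n - v| := abs_pos.mpr (sub_ne_zero.mpr hxv)
        have hev : ∀ᶠ k : ℕ in atTop, a n * ((φ k (x n) : ℝ) : ℂ) = 0 := by
          filter_upwards [eventually_ge_atTop (Nat.ceil (1 / |x n - v|))] with k hk
          have h1 : 1 / |x n - v| ≤ (k:ℝ) := le_trans (Nat.le_ceil _) (by exact_mod_cast hk)
          have h2 : 1 ≤ (k:ℝ) * |x n - v| := by
            rw [div_le_iff₀ hd] at h1
            linarith
          have : φ k (x n) = 0 := max_eq_left (by linarith)
          rw [this]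
          simp
        exact Tendsto.congr' (EventuallyEq.symm hev) tendsto_const_nhds
    · rw [norm_mul, Complex.norm_real, Real.norm_eq_abs]
      have h01 := hφ01 k (x n)
      have : |φ k (x n)| ≤ 1 := by rw [abs_of_nonneg h01.1]; exact h01.2
      nlinarith [norm_nonneg (a n)]
  have : Tendsto (fun _ : ℕ => (0:ℂ)) atTop (𝓝 (∑' n : ℕ, (if x n = v then a n else 0))) := by
    refine htend.congr fun k => hzero k
  exact tendsto_nhds_unique this tendsto_const_nhds
lemma aux_sq_summable (f : lp (fun _ : ℕ => ℂ) 2) : Summable fun n => ‖f n‖ ^ (2:ℕ) := by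
  have hf := lp.memℓp f
  rw [memℓp_gen_iff (by norm_num : 0 < (2:ℝ≥0∞).toReal)] at hf
  refine hf.congr fun n => ?_
  rw [show (2:ℝ≥0∞).toReal = ((2:ℕ):ℝ) by norm_num, Real.rpow_natCast]

lemma aux_summable (f g : lp (fun _ : ℕ => ℂ) 2) :
    Summable fun n => ‖(starRingEnd ℂ) (f n) * g n‖ := by
  have hf2 := aux_sq_summable f
  have hg2 := aux_sq_summable g
  refine Summable.of_nonneg_of_le (fun n => norm_nonneg _) (fun n => ?_)
    ((hf2.add hg2).div_const 2)
  rw [norm_mul, RCLike.norm_conj]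
  nlinarith [norm_nonneg (f n), norm_nonneg (g n), sq_nonneg (‖f n‖ - ‖g n‖)]

lemma aux_memlp (f : lp (fun _ : ℕ => ℂ) 2) (P : ℕ → Prop) [DecidablePred P] :
    Memℓp (fun n => if P n then f n else 0) 2 := by
  apply memℓp_gen
  have hf := lp.memℓp f
  rw [memℓp_gen_iff (by norm_num : 0 < (2:ℝ≥0∞).toReal)] at hf
  refine Summable.of_nonneg_of_le (fun n => Real.rpow_nonneg (norm_nonneg _) _)
    (fun n => ?_) hf
  refine Real.rpow_le_rpow (norm_nonneg _) ?_ (by norm_num)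
  by_cases h : P n
  · rw [if_pos h]
  · rw [if_neg h, norm_zero]; exact norm_nonneg _

/-- Completeness of the semi-continuous system `{D^t gᵢ : i ∈ I, t ∈ [0,L]}` generated by a
bounded diagonal operator `D` (with real diagonal `lam`) on `ℓ²(ℕ, ℂ)` is equivalent to the
completeness, in each eigenspace of `D`, of the coordinate projections of the generators. -/
theorem diagonal_semicontinuous_complete_iff_eigenspace_complete
    (lam : ℕ → ℝ) (hlam : ∃ M : ℝ, ∀ n : ℕ, |lam n| ≤ M)
    (L : ℝ) (hL : 0 < L)
    {I : Type*} [Countable I] (g : I → lp (fun _ : ℕ => ℂ) 2) :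
    (∀ f : lp (fun _ : ℕ => ℂ) 2,
        (∀ (i : I) (t : ℝ), t ∈ Set.Icc (0 : ℝ) L →
          ∑' n : ℕ, (starRingEnd ℂ) (f n) * ((lam n : ℂ) ^ (t : ℂ)) * g i n = 0) → f = 0)
      ↔
    (∀ (v : ℝ) (f : lp (fun _ : ℕ => ℂ) 2), (∀ n : ℕ, lam n ≠ v → f n = 0) →
        (∀ i : I, ∑' n : ℕ, (starRingEnd ℂ) (f n) * g i n = 0) → f = 0) := by
  obtain ⟨M, hM⟩ := hlam
  constructor
  · -- completeness → eigenspace completeness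
    intro hcomp v f hsupp hinner
    apply hcomp f
    intro i t _
    have hterm : ∀ n : ℕ, (starRingEnd ℂ) (f n) * ((lam n : ℂ) ^ (t : ℂ)) * g i n
        = ((v:ℂ) ^ (t:ℂ)) * ((starRingEnd ℂ) (f n) * g i n) := by
      intro n
      by_cases hn : f n = 0
      · rw [hn]; simp
      · have hv : lam n = v := by
          by_contra hc
          exact hn (hsupp n hc)
        rw [hv]; ring
    rw [tsum_congr hterm, tsum_mul_left, hinner i, mul_zero]
  · -- eigenspace completeness → completeness
    intro heig f hall
    classical
    -- the coefficients
    set a : I → ℕ → ℂ := fun i n => (starRingEnd ℂ) (f n) * g i n with hadef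
    have ha : ∀ i, Summable fun n => ‖a i n‖ := fun i => aux_summable f (g i)
    -- indicator sums vanish
    have hind : ∀ (v : ℝ) (i : I), ∑' n : ℕ, (if lam n = v then a i n else 0) = 0 := by
      intro v i
      refine aux_indicator lam (a i) (ha i) ?_ v
      refine aux_cont lam M hM (a i) (ha i) ?_
      · intro m
        have hmom := aux_moments lam M hM (a i) (ha i) L hL ?_ m
        · rw [← hmom]
          exact tsum_congr fun n => by rw [Complex.cpow_natCast]
        · intro t ht
          have := hall i t ht
          rw [← this]
          exact tsum_congr fun n => by ring
    -- conclude coordinatewise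
    have hcoord : ∀ v : ℝ, ∀ n : ℕ, lam n = v → f n = 0 := by
      intro v
      set fv : lp (fun _ : ℕ => ℂ) 2 :=
        ⟨fun n => if lam n = v then f n else 0, aux_memlp f (fun n => lam n = v)⟩ with hfvdef
      have hfv_apply : ∀ n, fv n = if lam n = v then f n else 0 := fun n => rfl
      have hfv := heig v fv (fun n hn => by rw [hfv_apply, if_neg hn])
        (fun i => by
          have : ∀ n : ℕ, (starRingEnd ℂ) (fv n) * g i n
              = (if lam n = v then a i n else 0) := by
            intro n
            rw [hfv_apply]
            by_cases h : lam n = v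
            · rw [if_pos h, if_pos h]
            · rw [if_neg h, if_neg h, map_zero, zero_mul]
          rw [tsum_congr this]
          exact hind v i)
      intro n hn
      have : fv n = 0 := by rw [hfv]; rfl
      rw [hfv_apply, if_pos hn] at this
      exact this
    apply lp.ext
    funext n
    have := hcoord (lam n) n rfl
    simpa using this
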